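/- arXiv:0907.0928 — 2 statements merged into one kernel-verified Lean document; each statement's English description precedes it below -/
import Mathlib

section
/- Let m ≥ 0, and suppose real numbers a₁, a₃, …, a_{2m+1} satisfy a_{2j+1} = −((2m−2j+2)(2m−2j+1))/((2j+1)·2j) a_{2j−1} for 1 ≤ j ≤ m, and let B(j) = ∫₀^{π/2} (cos φ)^{2j+1}(sin φ)^{2m−2j} dφ. Then Σ_{j=0}^{m} a_{2j+1} B(j) = (1/(2m+1)) a₁ B(0) = ((−1)^m/(2m+1)) a_{2m+1}. -/
open Real Finset intervalIntegral

/-- Poly recursion via integration by parts. -/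
private lemma tele_polyRec (p q : ℕ) (hq : 1 ≤ q) :
    (2 * (p : ℝ) + 1) * ∫ u in (0:ℝ)..1, u ^ (2 * p) * (1 - u ^ 2) ^ q
      = (2 * (q : ℝ)) * ∫ u in (0:ℝ)..1, u ^ (2 * p + 2) * (1 - u ^ 2) ^ (q - 1) := by
  obtain ⟨r, rfl⟩ : ∃ r, q = r + 1 := ⟨q - 1, (Nat.succ_pred_eq_of_pos hq).symm⟩
  have hderiv : ∀ u : ℝ, HasDerivAt (fun u : ℝ => u ^ (2 * p + 1) * (1 - u ^ 2) ^ (r + 1))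
      ((2 * (p : ℝ) + 1) * (u ^ (2 * p) * (1 - u ^ 2) ^ (r + 1))
        - (2 * ((r : ℝ) + 1)) * (u ^ (2 * p + 2) * (1 - u ^ 2) ^ r)) u := by
    intro u
    have h1 : HasDerivAt (fun u : ℝ => u ^ (2 * p + 1)) ((2 * p + 1) * u ^ (2 * p)) u := by
      simpa using hasDerivAt_pow (2 * p + 1) u
    have h2 : HasDerivAt (fun u : ℝ => (1 - u ^ 2) ^ (r + 1))
        ((r + 1 : ℝ) * (1 - u ^ 2) ^ r * (-(2 * u))) u := by
      have hin : HasDerivAt (fun u : ℝ => 1 - u ^ 2) (-(2 * u)) u := by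
        simpa using (hasDerivAt_pow 2 u).const_sub 1
      simpa [Function.comp_def] using (hasDerivAt_pow (r + 1) (1 - u ^ 2)).comp u hin
    refine (h1.fun_mul h2).congr_deriv ?_
    push_cast
    ring
  have hcont : Continuous fun u : ℝ =>
      (2 * (p : ℝ) + 1) * (u ^ (2 * p) * (1 - u ^ 2) ^ (r + 1))
        - (2 * ((r : ℝ) + 1)) * (u ^ (2 * p + 2) * (1 - u ^ 2) ^ r) := by fun_prop
  have hFTC := intervalIntegral.integral_eq_sub_of_hasDerivAt
    (fun u _ => hderiv u) (hcont.intervalIntegrable 0 1)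
  have hsplit : (∫ u in (0:ℝ)..1,
      ((2 * (p : ℝ) + 1) * (u ^ (2 * p) * (1 - u ^ 2) ^ (r + 1))
        - (2 * ((r : ℝ) + 1)) * (u ^ (2 * p + 2) * (1 - u ^ 2) ^ r)))
      = (2 * (p : ℝ) + 1) * (∫ u in (0:ℝ)..1, u ^ (2 * p) * (1 - u ^ 2) ^ (r + 1))
        - (2 * ((r : ℝ) + 1)) * ∫ u in (0:ℝ)..1, u ^ (2 * p + 2) * (1 - u ^ 2) ^ r := by
    rw [intervalIntegral.integral_sub, intervalIntegral.integral_const_mul,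
      intervalIntegral.integral_const_mul]
    · exact (Continuous.intervalIntegrable (by fun_prop) 0 1)
    · exact (Continuous.intervalIntegrable (by fun_prop) 0 1)
  rw [hsplit] at hFTC
  have : ((1:ℝ) ^ (2 * p + 1) * (1 - (1:ℝ) ^ 2) ^ (r + 1))
      - ((0:ℝ) ^ (2 * p + 1) * (1 - (0:ℝ) ^ 2) ^ (r + 1)) = 0 := by
    simp
  rw [this] at hFTC
  simp only [Nat.add_sub_cancel]
  push_cast
  linarith [hFTC]

private lemma tele_trig_eq (n q : ℕ) :
    (∫ φ in (0:ℝ)..(π / 2), Real.cos φ ^ (2 * q + 1) * Real.sin φ ^ n)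
      = ∫ u in (0:ℝ)..1, u ^ n * (1 - u ^ 2) ^ q := by
  have h := integral_sin_pow_mul_cos_pow_odd (a := 0) (b := π/2) n q
  simp only [Real.sin_zero, Real.sin_pi_div_two] at h
  rw [← h]
  congr 1
  ext φ
  ring


private lemma tele_a_fact (m : ℕ) (a : ℕ → ℝ)
    (ha : ∀ j : ℕ, 1 ≤ j → j ≤ m →
      a (2 * j + 1) =
        -(((2 * (m : ℝ) - 2 * j + 2) * (2 * (m : ℝ) - 2 * j + 1)) /
            ((2 * (j : ℝ) + 1) * (2 * j))) * a (2 * j - 1)) :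
    ∀ j, j ≤ m → (((2 * j + 1).factorial : ℝ) * ((2 * (m - j)).factorial : ℝ)) * a (2 * j + 1)
      = (-1 : ℝ) ^ j * ((2 * m).factorial : ℝ) * a 1 := by
  intro j
  induction j with
  | zero => intro _; simp [Nat.factorial]
  | succ j ih =>
    intro hj
    have hj' : j ≤ m := le_of_lt (Nat.lt_of_succ_le hj)
    have ihv := ih hj'
    have hrec := ha (j + 1) (Nat.le_add_left 1 j) hj
    have h21 : 2 * (j + 1) - 1 = 2 * j + 1 := by omega
    rw [h21] at hrec
    obtain ⟨k, hk⟩ : ∃ k, m - j = k + 1 := ⟨m - (j+1), by omega⟩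
    have hmj : m - (j + 1) = k := by omega
    have hmk : (m : ℝ) = j + k + 1 := by
      have : m = j + k + 1 := by omega
      exact_mod_cast congrArg Nat.cast this
    rw [hmj]
    rw [hk] at ihv
    -- cast factorial recursions
    have f1 : ((2 * (j + 1) + 1).factorial : ℝ)
        = (2 * j + 3) * (2 * j + 2) * ((2 * j + 1).factorial : ℝ) := by
      have : 2 * (j + 1) + 1 = (2 * j + 1) + 1 + 1 := by ring
      rw [this, Nat.factorial_succ, Nat.factorial_succ]
      push_cast; ring
    have f2 : ((2 * (k + 1)).factorial : ℝ)
        = (2 * k + 2) * (2 * k + 1) * ((2 * k).factorial : ℝ) := by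
      have : 2 * (k + 1) = (2 * k) + 1 + 1 := by ring
      rw [this, Nat.factorial_succ, Nat.factorial_succ]
      push_cast; ring
    rw [hrec, f1]
    have expand : -((2 * (m:ℝ) - 2 * ((j:ℕ)+1 : ℕ) + 2) * (2 * (m:ℝ) - 2 * ((j:ℕ)+1 : ℕ) + 1) /
          ((2 * ((j:ℕ)+1 : ℕ) + 1) * (2 * ((j:ℕ)+1 : ℕ))))
        = -((2 * (k:ℝ) + 2) * (2 * (k:ℝ) + 1)) / ((2 * (j:ℝ) + 3) * (2 * (j:ℝ) + 2)) := by
      push_cast [hmk]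
      field_simp
      ring
    rw [expand]
    have hne3 : ((2 * (j:ℝ) + 3) * (2 * (j:ℝ) + 2)) ≠ 0 := by positivity
    rw [f2] at ihv
    field_simp
    push_cast at ihv ⊢
    linear_combination (-1) * ihv

open Real Finset

/-- Telescoping identity: if `a₁, a₃, …, a_{2m+1}` satisfy
`a_{2j+1} = −((2m−2j+2)(2m−2j+1))/((2j+1)·2j) a_{2j−1}` for `1 ≤ j ≤ m`, and
`B(j) = ∫₀^{π/2} (cos φ)^{2j+1}(sin φ)^{2m−2j} dφ`, then
`Σ_{j=0}^m a_{2j+1} B(j) = (1/(2m+1)) a₁ B(0) = ((−1)^m/(2m+1)) a_{2m+1}`. -/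
theorem telescoping_sum (m : ℕ) (a : ℕ → ℝ)
    (ha : ∀ j : ℕ, 1 ≤ j → j ≤ m →
      a (2 * j + 1) =
        -(((2 * (m : ℝ) - 2 * j + 2) * (2 * (m : ℝ) - 2 * j + 1)) /
            ((2 * (j : ℝ) + 1) * (2 * j))) * a (2 * j - 1)) :
    (∑ j ∈ Finset.range (m + 1),
        a (2 * j + 1) *
          ∫ φ in (0:ℝ)..(π / 2), (Real.cos φ) ^ (2 * j + 1) * (Real.sin φ) ^ (2 * m - 2 * j))
      = (1 / (2 * (m : ℝ) + 1)) * a 1 *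
          ∫ φ in (0:ℝ)..(π / 2), Real.cos φ * (Real.sin φ) ^ (2 * m) ∧
    (∑ j ∈ Finset.range (m + 1),
        a (2 * j + 1) *
          ∫ φ in (0:ℝ)..(π / 2), (Real.cos φ) ^ (2 * j + 1) * (Real.sin φ) ^ (2 * m - 2 * j))
      = ((-1 : ℝ) ^ m / (2 * (m : ℝ) + 1)) * a (2 * m + 1) := by
  set I : ℕ → ℝ := fun j =>
    ∫ φ in (0:ℝ)..(π / 2), (Real.cos φ) ^ (2 * j + 1) * (Real.sin φ) ^ (2 * m - 2 * j) with hI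
  set T : ℕ → ℝ := fun j => a (2 * j + 1) * I j with hT
  -- integral recursion in trig form
  have hIrec : ∀ j : ℕ, 1 ≤ j → j ≤ m →
      (2 * (m:ℝ) - 2 * j + 1) * I j = (2 * (j:ℝ)) * I (j - 1) := by
    intro j hj1 hjm
    obtain ⟨j', rfl⟩ : ∃ j', j = j' + 1 := ⟨j - 1, (Nat.succ_pred_eq_of_pos hj1).symm⟩
    have hp : 2 * m - 2 * (j' + 1) = 2 * (m - (j' + 1)) := by omega
    have hp' : 2 * m - 2 * j' = 2 * (m - (j' + 1)) + 2 := by omega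
    have hIj : I (j' + 1) = ∫ u in (0:ℝ)..1, u ^ (2 * (m - (j'+1))) * (1 - u ^ 2) ^ (j'+1) := by
      simp only [hI]
      rw [hp, tele_trig_eq]
    have hIj' : I j' = ∫ u in (0:ℝ)..1, u ^ (2 * (m - (j'+1)) + 2) * (1 - u ^ 2) ^ j' := by
      simp only [hI]
      rw [hp', tele_trig_eq]
    have := tele_polyRec (m - (j' + 1)) (j' + 1) (Nat.le_add_left 1 j')
    simp only [Nat.add_sub_cancel] at this
    rw [hIj, Nat.add_sub_cancel, hIj']
    have hcast : (2 * ((m - (j'+1) : ℕ) : ℝ) + 1) = 2 * (m:ℝ) - 2 * ((j'+1 : ℕ):ℝ) + 1 := by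
      have : ((m - (j'+1) : ℕ) : ℝ) = (m : ℝ) - ((j'+1 : ℕ) : ℝ) := by
        push_cast [Nat.cast_sub hjm]; ring
      rw [this]; push_cast; ring
    rw [← hcast]
    exact this
  -- key pairwise relation
  have hrel : ∀ j : ℕ, 1 ≤ j → j ≤ m →
      (2 * (j:ℝ) + 1) * T j + (2 * (m:ℝ) - 2 * j + 2) * T (j - 1) = 0 := by
    intro j hj1 hjm
    have hIr := hIrec j hj1 hjm
    have har := ha j hj1 hjm
    have h21 : 2 * j - 1 = 2 * (j - 1) + 1 := by omega
    rw [h21] at har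
    simp only [hT, har]
    have hj0 : (0:ℝ) < (j:ℝ) := by exact_mod_cast hj1
    have hne : (2 * (j:ℝ) + 1) * (2 * (j:ℝ)) ≠ 0 := by positivity
    field_simp
    linear_combination (-1 * ((m:ℝ) - j + 1) * a (2 * (j-1) + 1)) * hIr
  -- summing the relation
  have key : ∀ i ∈ Finset.range m,
      (2 * ((i:ℝ) + 1) + 1) * T (i + 1) + (2 * (m:ℝ) - 2 * i) * T i = 0 := by
    intro i hi
    have him : i + 1 ≤ m := by simpa using Nat.succ_le_of_lt (Finset.mem_range.mp hi)
    have h := hrel (i + 1) (Nat.le_add_left 1 i) him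
    simp only [Nat.add_sub_cancel] at h
    push_cast at h
    linear_combination h
  have main : (2 * (m:ℝ) + 1) * ∑ j ∈ Finset.range (m + 1), T j = T 0 := by
    have expand : (2 * (m:ℝ) + 1) * ∑ j ∈ Finset.range (m + 1), T j
        = ∑ j ∈ Finset.range (m + 1), ((2 * (j:ℝ) + 1) * T j)
          + ∑ j ∈ Finset.range (m + 1), ((2 * (m:ℝ) - 2 * j) * T j) := by
      rw [Finset.mul_sum, ← Finset.sum_add_distrib]
      exact Finset.sum_congr rfl fun j _ => by push_cast; ring
    calc (2 * (m:ℝ) + 1) * ∑ j ∈ Finset.range (m + 1), T j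
        = ∑ j ∈ Finset.range (m + 1), ((2 * (j:ℝ) + 1) * T j)
          + ∑ j ∈ Finset.range (m + 1), ((2 * (m:ℝ) - 2 * j) * T j) := expand
      _ = (∑ i ∈ Finset.range m, (2 * ((i+1:ℕ):ℝ) + 1) * T (i+1) + (2 * ((0:ℕ):ℝ) + 1) * T 0)
          + (∑ i ∈ Finset.range m, (2 * (m:ℝ) - 2 * i) * T i + (2 * (m:ℝ) - 2 * m) * T m) := by
          rw [Finset.sum_range_succ' (fun j => (2 * (j:ℝ) + 1) * T j) m,
            Finset.sum_range_succ (fun j => (2 * (m:ℝ) - 2 * j) * T j) m]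
      _ = (∑ i ∈ Finset.range m, ((2 * ((i+1:ℕ):ℝ) + 1) * T (i+1) + (2 * (m:ℝ) - 2 * i) * T i))
          + T 0 := by
          rw [Finset.sum_add_distrib]; push_cast; ring
      _ = T 0 := by
          rw [Finset.sum_eq_zero, zero_add]
          intro i hi
          have := key i hi
          push_cast
          linear_combination this
  -- value of I 0
  have hI0 : I 0 = 1 / (2 * (m:ℝ) + 1) := by
    have h0 : I 0 = ∫ u in (0:ℝ)..1, u ^ (2 * m) * (1 - u ^ 2) ^ 0 := by
      simp only [hI, Nat.sub_zero, Nat.mul_zero]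
      exact tele_trig_eq (2 * m) 0
    rw [h0]
    simp only [pow_zero, mul_one, integral_pow]
    push_cast
    norm_num
  have hm1 : (2 * (m:ℝ) + 1) ≠ 0 := by positivity
  have hT0 : T 0 = a 1 * I 0 := by norm_num [hT]
  have hS : ∑ j ∈ Finset.range (m + 1), T j = 1 / (2 * (m:ℝ) + 1) * (a 1 * I 0) := by
    rw [← hT0, ← main]
    field_simp
  have hIcos : (∫ φ in (0:ℝ)..(π / 2), Real.cos φ * Real.sin φ ^ (2 * m)) = I 0 := by
    simp only [hI, Nat.sub_zero, Nat.mul_zero, Nat.mul_one, pow_one]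
    norm_num
  constructor
  · rw [hIcos]
    rw [hS]; ring
  · have hf := tele_a_fact m a ha m le_rfl
    simp only [Nat.sub_self, Nat.mul_zero, Nat.factorial_zero, Nat.cast_one, mul_one] at hf
    have hfs : ((2 * m + 1).factorial : ℝ) = (2 * (m:ℝ) + 1) * ((2 * m).factorial : ℝ) := by
      rw [Nat.factorial_succ]
      push_cast; ring
    rw [hfs] at hf
    have hfacne : ((2 * m).factorial : ℝ) ≠ 0 := by
      exact_mod_cast Nat.factorial_ne_zero (2 * m)
    have ha2m : a (2 * m + 1) = (-1:ℝ) ^ m * a 1 / (2 * (m:ℝ) + 1) := by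
      rw [eq_div_iff hm1]
      have h2 : ((2 * m).factorial : ℝ) * (a (2 * m + 1) * (2 * (m:ℝ) + 1))
          = ((2 * m).factorial : ℝ) * ((-1:ℝ) ^ m * a 1) := by linear_combination hf
      exact mul_left_cancel₀ hfacne h2
    rw [hS, hI0, ha2m]
    have hsq : ((-1:ℝ) ^ m) * ((-1:ℝ) ^ m) = 1 := by
      rw [← pow_add, ← two_mul, pow_mul]
      norm_num
    field_simp
    rw [sq, hsq, mul_one]
end

section
/- For λ, η ∈ ℂ (viewed as stereographic coordinates of points y, u ∈ S²) and t ∈ ℝ, the inequality u·y > tanh t holds if and only if e^t < |(λ̄η + 1)/(η − λ)|. -/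
open Real
open scoped RealInnerProductSpace

noncomputable section

abbrev E3 := EuclideanSpace ℝ (Fin 3)

lemma stereo_re_im (c1 c2 c0 : ℝ) (h0 : (1:ℝ) + c0 ≠ 0) :
    (((c1:ℂ) + (c2:ℂ)*Complex.I) / (1 + (c0:ℂ))).re = c1 / (1 + c0) ∧
    (((c1:ℂ) + (c2:ℂ)*Complex.I) / (1 + (c0:ℂ))).im = c2 / (1 + c0) := by
  have h : (1 : ℂ) + (c0:ℂ) = ((1+c0 : ℝ):ℂ) := by push_cast; ring
  have hre : ((c1:ℂ) + (c2:ℂ)*Complex.I).re = c1 := by simp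
  have him : ((c1:ℂ) + (c2:ℂ)*Complex.I).im = c2 := by simp
  rw [h]
  rw [Complex.div_ofReal_re, Complex.div_ofReal_im, hre, him]
  exact ⟨rfl, rfl⟩

/-- In stereographic coordinates `λ = (y₂+iy₃)/(1+y₁)`, `η = (u₂+iu₃)/(1+u₁)`
of points `y, u ∈ S²`, the inequality `u·y > tanh t` holds if and only if
`e^t < |(λ̄η + 1)/(η − λ)|`. -/
theorem cap_stereographic (t : ℝ) (y u : E3) (hy : ‖y‖ = 1) (hu : ‖u‖ = 1)
    (hy0 : y 0 ≠ -1) (hu0 : u 0 ≠ -1) (l η : ℂ)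
    (hl : l = ((y 1 : ℂ) + (y 2 : ℂ) * Complex.I) / (1 + (y 0 : ℂ)))
    (hη : η = ((u 1 : ℂ) + (u 2 : ℂ) * Complex.I) / (1 + (u 0 : ℂ)))
    (hne : η ≠ l) :
    ⟪u, y⟫ > Real.tanh t ↔
      Real.exp t < ‖((starRingEnd ℂ) l * η + 1) / (η - l)‖ := by
  have hy2 : y 0 ^ 2 + y 1 ^ 2 + y 2 ^ 2 = 1 := by
    have h : ⟪y, y⟫ = 1 := by
      rw [real_inner_self_eq_norm_sq, hy]; norm_num
    rw [PiLp.inner_apply, Fin.sum_univ_three] at h; simp [RCLike.inner_apply] at h; linear_combination h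
  have hu2 : u 0 ^ 2 + u 1 ^ 2 + u 2 ^ 2 = 1 := by
    have h : ⟪u, u⟫ = 1 := by
      rw [real_inner_self_eq_norm_sq, hu]; norm_num
    rw [PiLp.inner_apply, Fin.sum_univ_three] at h; simp [RCLike.inner_apply] at h; linear_combination h
  have ha : 0 < 1 + y 0 := by
    have h1 : -1 ≤ y 0 := by nlinarith [sq_nonneg (y 1), sq_nonneg (y 2), sq_nonneg (y 0 + 1)]
    have h2 : -1 < y 0 := lt_of_le_of_ne h1 (Ne.symm hy0)
    linarith
  have hb : 0 < 1 + u 0 := by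
    have h1 : -1 ≤ u 0 := by nlinarith [sq_nonneg (u 1), sq_nonneg (u 2), sq_nonneg (u 0 + 1)]
    have h2 : -1 < u 0 := lt_of_le_of_ne h1 (Ne.symm hu0)
    linarith
  set p := l.re with hpdef
  set q := l.im with hqdef
  set r := η.re with hrdef
  set s := η.im with hsdef
  have hp : p = y 1 / (1 + y 0) := by
    rw [hpdef, hl]; exact (stereo_re_im _ _ _ ha.ne').1
  have hq : q = y 2 / (1 + y 0) := by
    rw [hqdef, hl]; exact (stereo_re_im _ _ _ ha.ne').2
  have hr : r = u 1 / (1 + u 0) := by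
    rw [hrdef, hη]; exact (stereo_re_im _ _ _ hb.ne').1
  have hs : s = u 2 / (1 + u 0) := by
    rw [hsdef, hη]; exact (stereo_re_im _ _ _ hb.ne').2
  have h1m : 1 + (p^2+q^2) = 2/(1 + y 0) := by
    rw [hp, hq]; field_simp; linear_combination hy2
  have h1m' : 1 - (p^2+q^2) = 2*(y 0)/(1 + y 0) := by
    rw [hp, hq]; field_simp; linear_combination (-1) * hy2
  have h1n : 1 + (r^2+s^2) = 2/(1 + u 0) := by
    rw [hr, hs]; field_simp; linear_combination hu2
  have h1n' : 1 - (r^2+s^2) = 2*(u 0)/(1 + u 0) := by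
    rw [hr, hs]; field_simp; linear_combination (-1) * hu2
  have hinner : ⟪u, y⟫ = u 0 * y 0 + u 1 * y 1 + u 2 * y 2 := by
    simp [PiLp.inner_apply, Fin.sum_univ_three, RCLike.inner_apply]; ring
  have hip : u 0 * y 0 + u 1 * y 1 + u 2 * y 2
      = ((1-(p^2+q^2))*(1-(r^2+s^2)) + 4*(p*r+q*s)) / ((1+(p^2+q^2))*(1+(r^2+s^2))) := by
    rw [h1m, h1m', h1n, h1n', hp, hq, hr, hs]
    field_simp
    ring
  set A := ‖(starRingEnd ℂ) l * η + 1‖ with hAdef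
  set B := ‖η - l‖ with hBdef
  have hBpos : 0 < B := by
    rw [hBdef]; exact norm_pos_iff.mpr (sub_ne_zero.mpr hne)
  have hA2 : A^2 = (p*r + q*s + 1)^2 + (p*s - q*r)^2 := by
    rw [hAdef, Complex.sq_norm, Complex.normSq_apply]
    simp [Complex.mul_re, Complex.mul_im]
    ring
  have hB2 : B^2 = (r - p)^2 + (s - q)^2 := by
    rw [hBdef, Complex.sq_norm, Complex.normSq_apply]
    simp
    ring
  have hsum : A^2 + B^2 = (1+(p^2+q^2))*(1+(r^2+s^2)) := by
    rw [hA2, hB2]; ring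
  have hdiff : A^2 - B^2 = (1-(p^2+q^2))*(1-(r^2+s^2)) + 4*(p*r+q*s) := by
    rw [hA2, hB2]; ring
  have hE : 0 < Real.exp t := Real.exp_pos t
  have htanh : Real.tanh t = ((Real.exp t)^2 - 1)/((Real.exp t)^2 + 1) := by
    rw [Real.tanh_eq_sinh_div_cosh, Real.sinh_eq, Real.cosh_eq, Real.exp_neg]
    have h1 : Real.exp t + (Real.exp t)⁻¹ ≠ 0 := by positivity
    field_simp
  clear_value p q r s A B
  rw [hinner, hip, htanh, norm_div, ← hAdef, ← hBdef]
  rw [gt_iff_lt, div_lt_div_iff₀ (by positivity) (by positivity), lt_div_iff₀ hBpos,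
    ← hsum, ← hdiff]
  have hA0 : 0 ≤ A := by rw [hAdef]; exact norm_nonneg _
  constructor
  · intro h
    have h2 : (Real.exp t * B)^2 < A^2 := by rw [mul_pow]; linarith [h]
    exact lt_of_pow_lt_pow_left₀ 2 hA0 h2
  · intro h
    have hEB : 0 ≤ Real.exp t * B := by positivity
    have h2 : (Real.exp t * B)^2 < A^2 := pow_lt_pow_left₀ h hEB (by norm_num)
    rw [mul_pow] at h2
    linarith [h2]

end
end
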